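/- In the domain R = K[a, v2, v1], the three-term complex R --(v2, -a^{r+1}, -1)^T--> R^3 --M--> R^3 --(v1, v2, a^{r+1}v1 + v2^{t-1}A)--> R, where M is the 3x3 matrix with rows (a^{r+1}, v2, 0), (v2^{t-2}A, -v1, a^{r+1}v1 + v2^{t-1}A), (-1, 0, -v2), is exact at both middle terms, the leftmost map is injective, and the cokernel of the rightmost map is R/(v1, v2). -/

import Mathlib

noncomputable section

open MvPolynomial

/-- `R = K[a, v₂, v₁]`, with `a = X 0`, `v₂ = X 1`, `v₁ = X 2`. -/
abbrev R3 (K : Type*) [Field K] := MvPolynomial (Fin 3) K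

variable (K : Type*) [Field K]

/-- The inclusion of `K[a, v₂]` into `R = K[a, v₂, v₁]`. -/
def emb (A0 : MvPolynomial (Fin 2) K) : R3 K := aeval ![X 0, X 1] A0

/-- The middle matrix of the locally free resolution, on the chart `U₁`. -/
def matM (r t : ℕ) (A : R3 K) : Matrix (Fin 3) (Fin 3) (R3 K) :=
  !![X 0 ^ (r + 1), X 1, 0;
     X 1 ^ (t - 2) * A, -(X 2), X 0 ^ (r + 1) * X 2 + X 1 ^ (t - 1) * A;
     -1, 0, -(X 1)]

/-- The left-most map `R → R³`, given by the column `(v₂, -a^{r+1}, -1)ᵀ`. -/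
def d3 (r : ℕ) : R3 K →ₗ[R3 K] (Fin 3 → R3 K) :=
  LinearMap.pi fun i => (![X 1, -(X 0 ^ (r + 1)), -1] : Fin 3 → R3 K) i • LinearMap.id

/-- The middle map `R³ → R³`. -/
def d2 (r t : ℕ) (A : R3 K) : (Fin 3 → R3 K) →ₗ[R3 K] (Fin 3 → R3 K) :=
  Matrix.toLin' (matM K r t A)

/-- The right-most map `R³ → R`, given by the row `(v₁, v₂, a^{r+1}v₁ + v₂^{t-1}A)`. -/
def d1 (r t : ℕ) (A : R3 K) : (Fin 3 → R3 K) →ₗ[R3 K] R3 K :=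
  ∑ i, (![X 2, X 1, X 0 ^ (r + 1) * X 2 + X 1 ^ (t - 1) * A] : Fin 3 → R3 K) i •
    LinearMap.proj i

lemma d3_apply (r : ℕ) (p : R3 K) :
    d3 K r p = ![X 1 * p, -(X 0 ^ (r + 1)) * p, -p] := by
  funext i
  fin_cases i <;> simp [d3]

lemma d2_apply (r t : ℕ) (A : R3 K) (x : Fin 3 → R3 K) :
    d2 K r t A x = ![X 0 ^ (r + 1) * x 0 + X 1 * x 1,
      X 1 ^ (t - 2) * A * x 0 - X 2 * x 1 + (X 0 ^ (r + 1) * X 2 + X 1 ^ (t - 1) * A) * x 2,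
      -(x 0) - X 1 * x 2] := by
  funext i
  fin_cases i <;>
    simp [d2, matM, Matrix.toLin'_apply, Matrix.mulVec, dotProduct,
      Fin.sum_univ_three] <;> ring

lemma d1_apply (r t : ℕ) (A : R3 K) (x : Fin 3 → R3 K) :
    d1 K r t A x = X 2 * x 0 + X 1 * x 1 + (X 0 ^ (r + 1) * X 2 + X 1 ^ (t - 1) * A) * x 2 := by
  simp [d1, Fin.sum_univ_three, smul_eq_mul]

lemma prime_X1 : Prime (X 1 : R3 K) := by
  rw [← MulEquiv.prime_iff ((renameEquiv K (Equiv.swap (0 : Fin 3) 1)).trans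
    (MvPolynomial.finSuccEquiv K 2)).toMulEquiv]
  show Prime (((renameEquiv K (Equiv.swap (0 : Fin 3) 1)).trans
    (MvPolynomial.finSuccEquiv K 2)) (X 1))
  rw [AlgEquiv.trans_apply, renameEquiv_apply, rename_X, Equiv.swap_apply_right,
    finSuccEquiv_X_zero]
  exact Polynomial.prime_X

lemma X1_not_dvd_X2 : ¬ (X 1 : R3 K) ∣ X 2 := by
  intro h
  have h2 := map_dvd (eval (fun i : Fin 3 => if i = 1 then 0 else 1) : R3 K →+* K) h
  simp at h2

/-- The three-term complex is a resolution: the leftmost map is injective, it is exact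
at both middle terms, and the image of the rightmost map is the ideal `(v₁, v₂)`, so
the cokernel is `R/(v₁, v₂)`. -/
theorem stmt8 (r t : ℕ) (ht : 2 ≤ t) (A0 : MvPolynomial (Fin 2) K) :
    Function.Injective (d3 K r) ∧
    LinearMap.range (d3 K r) = LinearMap.ker (d2 K r t (emb K A0)) ∧
    LinearMap.range (d2 K r t (emb K A0)) = LinearMap.ker (d1 K r t (emb K A0)) ∧
    LinearMap.range (d1 K r t (emb K A0)) =
      Submodule.span (R3 K) {(X 2 : R3 K), X 1} := by
  obtain ⟨s, rfl⟩ := Nat.exists_eq_add_of_le ht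
  set A : R3 K := emb K A0 with hA
  have hts2 : 2 + s - 2 = s := by omega
  have hts1 : 2 + s - 1 = s + 1 := by omega
  refine ⟨?_, ?_, ?_, ?_⟩
  · -- injectivity of d3
    intro p q h
    have h2 := congrFun h 2
    rw [d3_apply, d3_apply] at h2
    simpa using h2
  · -- range d3 = ker d2
    ext x
    simp only [LinearMap.mem_range, LinearMap.mem_ker]
    constructor
    · rintro ⟨p, rfl⟩
      rw [d3_apply, d2_apply]
      simp only [hts1, hts2]
      funext i
      fin_cases i
      · show X 0 ^ (r + 1) * (X 1 * p) + X 1 * (-(X 0 ^ (r + 1)) * p) = 0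
        ring
      · show X 1 ^ s * A * (X 1 * p) - X 2 * (-(X 0 ^ (r + 1)) * p)
            + (X 0 ^ (r + 1) * X 2 + X 1 ^ (s + 1) * A) * (-p) = 0
        ring
      · show -(X 1 * p) - X 1 * (-p) = 0
        ring
    · intro hx
      rw [d2_apply] at hx
      have h0 := congrFun hx 0
      have h2 := congrFun hx 2
      simp only [Matrix.cons_val_zero, Matrix.cons_val_one, Matrix.head_cons,
        Matrix.cons_val_two, Matrix.tail_cons, Pi.zero_apply] at h0 h2
      have hx0 : x 0 = -(X 1 * x 2) := by linear_combination -h2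
      have hx1 : x 1 = X 0 ^ (r + 1) * x 2 := by
        have hv : (X 1 : R3 K) * (x 1 - X 0 ^ (r + 1) * x 2) = 0 := by
          linear_combination h0 - X 0 ^ (r + 1) * hx0
        rcases mul_eq_zero.mp hv with h | h
        · exact absurd h (X_ne_zero 1)
        · linear_combination h
      refine ⟨-(x 2), ?_⟩
      rw [d3_apply]
      funext i
      fin_cases i
      · show X 1 * -(x 2) = x 0
        linear_combination -hx0
      · show -(X 0 ^ (r + 1)) * -(x 2) = x 1
        linear_combination -hx1
      · show -(-(x 2)) = x 2
        ring
  · -- range d2 = ker d1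
    ext x
    simp only [LinearMap.mem_range, LinearMap.mem_ker]
    constructor
    · rintro ⟨y, rfl⟩
      rw [d2_apply, d1_apply]
      simp only [Matrix.cons_val_zero, Matrix.cons_val_one, Matrix.head_cons,
        Matrix.cons_val_two, Matrix.tail_cons, hts1, hts2]
      ring
    · intro hx
      rw [d1_apply, hts1] at hx
      have key : (X 2 : R3 K) * (x 0 + X 0 ^ (r + 1) * x 2)
          = X 1 * (-(x 1 + X 1 ^ s * A * x 2)) := by
        linear_combination hx
      have hdvd : (X 1 : R3 K) ∣ x 0 + X 0 ^ (r + 1) * x 2 := by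
        rcases (prime_X1 K).2.2 _ _ ⟨_, key⟩ with h | h
        · exact absurd h (X1_not_dvd_X2 K)
        · exact h
      obtain ⟨q, hq⟩ := hdvd
      have hq1 : X 2 * (X 1 * q) = X 1 * (-(x 1 + X 1 ^ s * A * x 2)) := by
        rw [← hq]; exact key
      have hq2 : x 1 = -(X 2 * q) - X 1 ^ s * A * x 2 := by
        have hv : (X 1 : R3 K) * (x 1 + X 2 * q + X 1 ^ s * A * x 2) = 0 := by
          linear_combination hq1
        rcases mul_eq_zero.mp hv with h | h
        · exact absurd h (X_ne_zero 1)
        · linear_combination h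
      refine ⟨![-(x 2), q, 0], ?_⟩
      rw [d2_apply]
      simp only [hts1, hts2]
      funext i
      fin_cases i
      · show X 0 ^ (r + 1) * (![-(x 2), q, 0] 0) + X 1 * (![-(x 2), q, 0] 1) = x 0
        show X 0 ^ (r + 1) * -(x 2) + X 1 * q = x 0
        linear_combination -hq
      · show X 1 ^ s * A * (![-(x 2), q, 0] 0) - X 2 * (![-(x 2), q, 0] 1)
            + (X 0 ^ (r + 1) * X 2 + X 1 ^ (s + 1) * A) * (![-(x 2), q, 0] 2) = x 1
        show X 1 ^ s * A * -(x 2) - X 2 * q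
            + (X 0 ^ (r + 1) * X 2 + X 1 ^ (s + 1) * A) * 0 = x 1
        linear_combination -hq2
      · show -(![-(x 2), q, 0] 0) - X 1 * (![-(x 2), q, 0] 2) = x 2
        show -(-(x 2)) - X 1 * 0 = x 2
        ring
  · -- range d1 = span {X 2, X 1}
    apply le_antisymm
    · rintro y ⟨x, rfl⟩
      rw [d1_apply, hts1]
      rw [Submodule.mem_span_pair]
      refine ⟨x 0 + X 0 ^ (r + 1) * x 2, x 1 + X 1 ^ s * A * x 2, ?_⟩
      simp only [smul_eq_mul]
      ring
    · rw [Submodule.span_le]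
      rintro y hy
      simp only [Set.mem_insert_iff, Set.mem_singleton_iff] at hy
      rcases hy with rfl | rfl
      · exact ⟨![1, 0, 0], by rw [d1_apply]; simp⟩
      · exact ⟨![0, 1, 0], by rw [d1_apply]; simp⟩
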